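/- arXiv:math/9809079 — 5 statements merged into one kernel-verified Lean document; each statement's English description precedes it below -/
import Mathlib

section
/- Let S = {a_1, ..., a_n} be a multiset of nonnegative integers (n >= 2) with at least two of the a_i positive, and suppose S is imbalanced, i.e., if k is the largest integer such that 2^k divides every a_i, then the k-th bit of the nim-sum a_1 XOR ... XOR a_n is 1. Then there are no nonnegative integers t_1, ..., t_n with t_i >= a_i for all i such that the nim-sum of t_1, ..., t_n equals the nim-sum of (t_1 - a_1), ..., (t_n - a_n). -/
/-- The nim-sum (bitwise XOR) of a list of naturals. -/
def nimSum (l : List ℕ) : ℕ := l.foldr (· ^^^ ·) 0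

lemma nimSum_testBit (k : ℕ) : ∀ l : List ℕ,
    (nimSum l).testBit k = (l.map (fun x => x.testBit k)).foldr xor false
  | [] => by simp [nimSum]
  | x :: l => by
    have ih := nimSum_testBit k l
    simp only [nimSum, List.foldr_cons, List.map_cons] at *
    rw [Nat.testBit_xor, ih]

lemma ofFn_xor_fold : ∀ (n : ℕ) (p q : Fin n → Bool),
    (List.ofFn (fun i => xor (p i) (q i))).foldr xor false =
      xor ((List.ofFn p).foldr xor false) ((List.ofFn q).foldr xor false)
  | 0, p, q => by simp
  | n + 1, p, q => by
    simp only [List.ofFn_succ, List.foldr_cons]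
    rw [ofFn_xor_fold n (fun i => p i.succ) (fun i => q i.succ)]
    cases p 0 <;> cases q 0 <;>
      cases (List.ofFn fun i => p (Fin.succ i)).foldr xor false <;>
      cases (List.ofFn fun i => q (Fin.succ i)).foldr xor false <;> rfl

lemma bit_sub (x y k : ℕ) (hle : y ≤ x) (hdvd : 2 ^ k ∣ y) :
    x.testBit k = xor (y.testBit k) ((x - y).testBit k) := by
  obtain ⟨b, rfl⟩ := hdvd
  have hpow : 0 < 2 ^ k := Nat.pow_pos (by norm_num)
  have hq : b ≤ x / 2 ^ k := (Nat.le_div_iff_mul_le hpow).2 (by nlinarith)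
  have hsub : (x - 2 ^ k * b) / 2 ^ k = x / 2 ^ k - b := by
    rw [Nat.sub_mul_div x (2 ^ k) b]
  have hbb : (2 ^ k * b) / 2 ^ k = b := Nat.mul_div_cancel_left b hpow
  simp only [Nat.testBit_eq_decide_div_mod_eq, hsub, hbb]
  rcases Nat.mod_two_eq_zero_or_one (x / 2 ^ k) with h1 | h1 <;>
    rcases Nat.mod_two_eq_zero_or_one b with h2 | h2 <;>
    [ (have h3 : (x / 2 ^ k - b) % 2 = 0 := by omega);
      (have h3 : (x / 2 ^ k - b) % 2 = 1 := by omega);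
      (have h3 : (x / 2 ^ k - b) % 2 = 1 := by omega);
      (have h3 : (x / 2 ^ k - b) % 2 = 0 := by omega)] <;>
    simp [h1, h2, h3]

theorem stmt5 (n : ℕ) (hn : 2 ≤ n) (a : Fin n → ℕ)
    (hpos : ∃ i j, i ≠ j ∧ 0 < a i ∧ 0 < a j)
    (k : ℕ) (hk : ∀ i, 2 ^ k ∣ a i) (hkmax : ¬ ∀ i, 2 ^ (k + 1) ∣ a i)
    (himb : (nimSum (List.ofFn a)).testBit k = true) :
    ¬ ∃ t : Fin n → ℕ, (∀ i, a i ≤ t i) ∧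
      nimSum (List.ofFn t) = nimSum (List.ofFn fun i => t i - a i) := by
  rintro ⟨t, hle, heq⟩
  have hbit : ∀ i, (t i).testBit k =
      xor ((a i).testBit k) ((t i - a i).testBit k) :=
    fun i => bit_sub (t i) (a i) k (hle i) (hk i)
  have h1 : (nimSum (List.ofFn t)).testBit k =
      xor ((nimSum (List.ofFn a)).testBit k)
        ((nimSum (List.ofFn fun i => t i - a i)).testBit k) := by
    rw [nimSum_testBit, nimSum_testBit, nimSum_testBit,
      List.map_ofFn, List.map_ofFn, List.map_ofFn]
    rw [show ((fun x => x.testBit k) ∘ t) = fun i =>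
      xor (((fun x => x.testBit k) ∘ a) i)
        (((fun x => x.testBit k) ∘ fun i => t i - a i) i) from funext fun i => hbit i]
    exact ofFn_xor_fold n _ _
  rw [heq, himb] at h1
  cases h : (nimSum (List.ofFn fun i => t i - a i)).testBit k <;> rw [h] at h1 <;> simp at h1
end

section
/- Let S = {a_1, ..., a_n} be a multiset of nonnegative integers (n >= 2) with at least two of the a_i positive, and suppose S is balanced. Then there exist nonnegative integers t_1, ..., t_n with t_i >= a_i for all i such that the nim-sum of t_1, ..., t_n equals the nim-sum of (t_1 - a_1), ..., (t_n - a_n). -/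
lemma nimSum_cons (c : ℕ) (l : List ℕ) : nimSum (c :: l) = c ^^^ nimSum l := rfl

lemma xor_left_comm' (a b c : ℕ) : a ^^^ (b ^^^ c) = b ^^^ (a ^^^ c) := by
  rw [← Nat.xor_assoc, Nat.xor_comm a b, Nat.xor_assoc]

lemma two_mul_xor (u w : ℕ) : (2 * u) ^^^ (2 * w) = 2 * (u ^^^ w) := by
  have h1 : (2 * u ^^^ 2 * w) / 2 = u ^^^ w := by
    rw [Nat.xor_div_two]; congr 1 <;> omega
  have h2 : (2 * u ^^^ 2 * w) % 2 = (2 * u + 2 * w) % 2 := Nat.xor_mod_two_eq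
  omega

/-- If `u + w = 2^m - 1` then the addition has no carries, so the xor agrees. -/
lemma sum_ones_xor : ∀ (m : ℕ) (u w : ℕ), u + w = 2 ^ m - 1 → u ^^^ w = 2 ^ m - 1 := by
  intro m
  induction m with
  | zero =>
    intro u w h
    simp only [pow_zero] at h ⊢
    have hu : u = 0 := by omega
    have hw : w = 0 := by omega
    subst hu hw; rfl
  | succ m ih =>
    intro u w h
    have hp : 0 < 2 ^ m := Nat.two_pow_pos m
    have hs : 2 ^ (m + 1) = 2 * 2 ^ m := by rw [pow_succ]; ring
    have hd : u / 2 + w / 2 = 2 ^ m - 1 := by omega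
    have hih := ih (u / 2) (w / 2) hd
    have h1 : (u ^^^ w) / 2 = 2 ^ m - 1 := by rw [Nat.xor_div_two]; exact hih
    have h2 : (u ^^^ w) % 2 = (u + w) % 2 := Nat.xor_mod_two_eq
    omega

lemma pow_mul_xor (k : ℕ) : ∀ u w : ℕ, (2 ^ k * u) ^^^ (2 ^ k * w) = 2 ^ k * (u ^^^ w) := by
  induction k with
  | zero => intro u w; simp
  | succ k ih =>
    intro u w
    have hs : ∀ z : ℕ, 2 ^ (k + 1) * z = 2 * (2 ^ k * z) := by
      intro z; rw [pow_succ]; ring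
    rw [hs, hs, hs, two_mul_xor, ih]

lemma half_xor (m u : ℕ) (hu : u % 2 = 1) (hum : u < 2 ^ m) :
    ((2 ^ m - 1 - u) / 2) ^^^ ((2 ^ m - 1 - u) / 2 + u) = 2 ^ m - 1 := by
  have hp : 0 < 2 ^ m := Nat.two_pow_pos m
  have heven : 2 ^ m % 2 = 0 ∨ 2 ^ m = 1 := by
    cases m with
    | zero => right; rfl
    | succ m => left; have := Nat.two_pow_pos m; rw [pow_succ]; omega
  exact sum_ones_xor m _ _ (by omega)

lemma nimSum_scale (k : ℕ) : ∀ (n : ℕ) (g : Fin n → ℕ),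
    nimSum (List.ofFn fun i => 2 ^ k * g i) = 2 ^ k * nimSum (List.ofFn g)
  | 0, g => by simp [nimSum]
  | n + 1, g => by
    rw [List.ofFn_succ, List.ofFn_succ, nimSum_cons, nimSum_cons,
      nimSum_scale k n (fun i => g i.succ), pow_mul_xor]

lemma nimSum_xor : ∀ (n : ℕ) (f g : Fin n → ℕ),
    nimSum (List.ofFn fun i => f i ^^^ g i) = nimSum (List.ofFn f) ^^^ nimSum (List.ofFn g)
  | 0, f, g => by simp [nimSum]
  | n + 1, f, g => by
    rw [List.ofFn_succ, List.ofFn_succ, List.ofFn_succ, nimSum_cons, nimSum_cons, nimSum_cons,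
      nimSum_xor n (fun i => f i.succ) (fun i => g i.succ)]
    simp [Nat.xor_assoc, Nat.xor_comm, xor_left_comm']

lemma nimSum_mod_two : ∀ l : List ℕ, nimSum l % 2 = l.sum % 2
  | [] => rfl
  | c :: l => by
    rw [nimSum_cons, List.sum_cons]
    have h1 : (c ^^^ nimSum l) % 2 = (c + nimSum l) % 2 := Nat.xor_mod_two_eq
    have h2 := nimSum_mod_two l
    omega

/-- telescoping construction -/
lemma tel : ∀ (n : ℕ) (a : Fin n → ℕ) (y : ℕ), ∃ x : Fin n → ℕ,
    nimSum (List.ofFn fun i => x i ^^^ (x i + a i)) = y ^^^ (y + ∑ i, a i)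
  | 0, a, y => ⟨fun i => i.elim0, by simp [nimSum]⟩
  | n + 1, a, y => by
    obtain ⟨x', hx'⟩ := tel n (fun i => a i.succ) (y + a 0)
    refine ⟨Fin.cons y x', ?_⟩
    rw [List.ofFn_succ, nimSum_cons]
    simp only [Fin.cons_zero, Fin.cons_succ]
    rw [hx', Fin.sum_univ_succ, ← Nat.add_assoc]
    rw [Nat.xor_assoc, xor_cancel_left]

/-- pointed telescoping construction -/
lemma tel2 : ∀ (n : ℕ) (a : Fin n → ℕ) (p : Fin n) (X y : ℕ), ∃ x : Fin n → ℕ,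
    nimSum (List.ofFn fun i => x i ^^^ (x i + a i)) =
      (X ^^^ (X + a p)) ^^^ (y ^^^ (y + ((∑ i, a i) - a p)))
  | 0, _, p, _, _ => p.elim0
  | n + 1, a, p, X, y => by
    cases p using Fin.cases with
    | zero =>
      obtain ⟨x', hx'⟩ := tel n (fun i => a i.succ) y
      refine ⟨Fin.cons X x', ?_⟩
      rw [List.ofFn_succ, nimSum_cons]
      simp only [Fin.cons_zero, Fin.cons_succ]
      rw [hx', Fin.sum_univ_succ]
      congr 3
      omega
    | succ p' =>
      obtain ⟨x', hx'⟩ := tel2 n (fun i => a i.succ) p' X (y + a 0)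
      refine ⟨Fin.cons y x', ?_⟩
      rw [List.ofFn_succ, nimSum_cons]
      simp only [Fin.cons_zero, Fin.cons_succ]
      rw [hx', Fin.sum_univ_succ]
      have hle : a p'.succ ≤ ∑ i : Fin n, a i.succ :=
        Finset.single_le_sum (f := fun i => a i.succ) (fun i _ => Nat.zero_le _)
          (Finset.mem_univ p')
      have harith : y + a 0 + ((∑ i : Fin n, a i.succ) - a p'.succ)
          = y + (a 0 + ∑ i : Fin n, a i.succ - a p'.succ) := by omega
      rw [harith]
      simp [Nat.xor_assoc, Nat.xor_comm, xor_left_comm', xor_cancel_left]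

theorem stmt6 (n : ℕ) (hn : 2 ≤ n) (a : Fin n → ℕ)
    (hpos : ∃ i j, i ≠ j ∧ 0 < a i ∧ 0 < a j)
    (k : ℕ) (hk : ∀ i, 2 ^ k ∣ a i) (hkmax : ¬ ∀ i, 2 ^ (k + 1) ∣ a i)
    (hbal : (nimSum (List.ofFn a)).testBit k = false) :
    ∃ t : Fin n → ℕ, (∀ i, a i ≤ t i) ∧
      nimSum (List.ofFn t) = nimSum (List.ofFn fun i => t i - a i) := by
  push_neg at hkmax
  obtain ⟨p, hp⟩ := hkmax
  set A' : Fin n → ℕ := fun i => a i / 2 ^ k with hA'def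
  have ha : ∀ i, a i = 2 ^ k * A' i := fun i => (Nat.mul_div_cancel' (hk i)).symm
  have hkpos : 0 < 2 ^ k := Nat.two_pow_pos k
  -- A' p is odd
  have hU : A' p % 2 = 1 := by
    rcases Nat.mod_two_eq_zero_or_one (A' p) with h | h
    · exfalso
      apply hp
      obtain ⟨c, hc⟩ : ∃ c, A' p = 2 * c := ⟨A' p / 2, by omega⟩
      refine ⟨c, ?_⟩
      rw [ha p, hc, pow_succ]; ring
    · exact h
  -- parity of the total sum of A' is even
  have hnim : nimSum (List.ofFn a) = 2 ^ k * nimSum (List.ofFn A') := by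
    have : List.ofFn a = List.ofFn (fun i => 2 ^ k * A' i) := by
      congr 1; funext i; exact ha i
    rw [this, nimSum_scale]
  have hZ : nimSum (List.ofFn A') % 2 = 0 := by
    rw [hnim, Nat.testBit_eq_decide_div_mod_eq] at hbal
    rw [Nat.mul_div_cancel_left _ hkpos] at hbal
    simp only [decide_eq_false_iff_not] at hbal
    omega
  have hsum_par : (∑ i, A' i) % 2 = 0 := by
    have h1 := nimSum_mod_two (List.ofFn A')
    rw [List.sum_ofFn] at h1
    omega
  have hap_le : A' p ≤ ∑ i, A' i :=
    Finset.single_le_sum (fun i _ => Nat.zero_le _) (Finset.mem_univ p)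
  set U := A' p with hUdef
  set V := (∑ i, A' i) - U with hVdef
  have hV : V % 2 = 1 := by omega
  set m := U + V with hmdef
  have hUm : U < 2 ^ m := lt_of_le_of_lt (Nat.le_add_right U V) (Nat.lt_two_pow_self (n := m))
  have hVm : V < 2 ^ m := lt_of_le_of_lt (Nat.le_add_left V U) (Nat.lt_two_pow_self (n := m))
  set X := 2 ^ k * ((2 ^ m - 1 - U) / 2) with hXdef
  set y := 2 ^ k * ((2 ^ m - 1 - V) / 2) with hydef
  obtain ⟨x, hx⟩ := tel2 n a p X y
  have hZp : X ^^^ (X + a p) = 2 ^ k * (2 ^ m - 1) := by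
    rw [ha p, hXdef, ← Nat.mul_add, pow_mul_xor, half_xor m U hU hUm]
  have hsum' : (∑ i, a i) - a p = 2 ^ k * V := by
    have h1 : ∑ i, a i = 2 ^ k * ∑ i, A' i := by
      rw [Finset.mul_sum]; exact Finset.sum_congr rfl fun i _ => ha i
    rw [h1, ha p, hVdef, Nat.mul_sub_left_distrib]
  have hZq : y ^^^ (y + ((∑ i, a i) - a p)) = 2 ^ k * (2 ^ m - 1) := by
    rw [hsum', hydef, ← Nat.mul_add, pow_mul_xor, half_xor m V hV hVm]
  rw [hZp, hZq, Nat.xor_self] at hx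
  refine ⟨fun i => x i + a i, fun i => Nat.le_add_left _ _, ?_⟩
  have hfun : (fun i : Fin n => x i + a i - a i) = x := funext fun i => Nat.add_sub_cancel (x i) (a i)
  have hgoal : nimSum (List.ofFn fun i => (x i + a i) - a i) = nimSum (List.ofFn x) := by
    rw [hfun]
  rw [hgoal]
  have hx2 := nimSum_xor n x (fun i => x i + a i)
  rw [hx] at hx2
  exact (xor_eq_zero_iff.mp hx2.symm).symm
end

section
/- Let n be even, and let S = {a_1, ..., a_n} be a multiset of nonnegative integers with at least two a_i positive, which is balanced but not smooth, and such that bit k of a_i is 1 for every i (k as in the definition of balanced). Then there are no nonnegative integers t_1, ..., t_n with t_i >= a_i for all i such that both the nim-sum of t_1, ..., t_n and the nim-sum of (t_1 - a_1), ..., (t_n - a_n) are 0. -/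
/-- Bit `j` of `x` as an element of `ZMod 2`. -/
def bz (x j : ℕ) : ZMod 2 := ((x / 2 ^ j : ℕ) : ZMod 2)

lemma bz_eq (x j : ℕ) : bz x j = if x.testBit j then 1 else 0 := by
  rw [bz, Nat.testBit_eq_decide_div_mod_eq, ← ZMod.natCast_mod (x / 2 ^ j) 2]
  rcases Nat.mod_two_eq_zero_or_one (x / 2 ^ j) with h | h <;> rw [h] <;> simp

lemma nimSum_bz (l : List ℕ) (j : ℕ) :
    bz (nimSum l) j = (l.map (fun x => bz x j)).sum := by
  induction l with
  | nil => simp [nimSum, bz]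
  | cons x l ih =>
    have h : nimSum (x :: l) = x ^^^ nimSum l := rfl
    rw [h, List.map_cons, List.sum_cons, ← ih,
      bz_eq, bz_eq, bz_eq, Nat.testBit_xor]
    rcases x.testBit j <;> rcases (nimSum l).testBit j <;> simp <;> decide

lemma carry_eq (s k : ℕ) :
    s / 2 ^ k % 2 = if 2 ^ (k + 1) ≤ s % 2 ^ (k + 1) + 2 ^ k then 1 else 0 := by
  have h1 : s % (2 ^ k * 2) = s % 2 ^ k + 2 ^ k * (s / 2 ^ k % 2) := Nat.mod_mul
  have h2 : (2 : ℕ) ^ (k + 1) = 2 ^ k * 2 := pow_succ 2 k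
  have h3 : s % 2 ^ k < 2 ^ k := Nat.mod_lt _ (by positivity)
  rw [h2]
  rcases Nat.mod_two_eq_zero_or_one (s / 2 ^ k) with h | h <;>
    rw [h] at h1 ⊢ <;> split <;> omega

lemma bz_add (s a k : ℕ) (ha : a % 2 ^ (k + 1) = 2 ^ k) :
    bz (s + a) (k + 1) = bz s (k + 1) + bz a (k + 1) + bz s k := by
  have hM : 0 < 2 ^ (k + 1) := by positivity
  have hdiv : (s + a) / 2 ^ (k + 1) =
      s / 2 ^ (k + 1) + a / 2 ^ (k + 1) +
        (if 2 ^ (k + 1) ≤ s % 2 ^ (k + 1) + a % 2 ^ (k + 1) then 1 else 0) :=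
    Nat.add_div hM
  rw [ha] at hdiv
  have hc : bz s k =
      ((if 2 ^ (k + 1) ≤ s % 2 ^ (k + 1) + 2 ^ k then 1 else 0 : ℕ) : ZMod 2) := by
    rw [bz, ← ZMod.natCast_mod (s / 2 ^ k) 2, carry_eq]
  rw [bz, bz, bz, hdiv, Nat.cast_add, Nat.cast_add, hc]

theorem stmt11 (n : ℕ) (heven : Even n) (a : Fin n → ℕ)
    (hpos : ∃ i j, i ≠ j ∧ 0 < a i ∧ 0 < a j)
    (k : ℕ) (hk : ∀ i, 2 ^ k ∣ a i) (hkmax : ¬ ∀ i, 2 ^ (k + 1) ∣ a i)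
    (hbal : (nimSum (List.ofFn a)).testBit k = false)
    (hnotsmooth : ¬ ((nimSum (List.ofFn a)).testBit k = false ∧
        (nimSum (List.ofFn a)).testBit (k + 1) = false))
    (hbits : ∀ i, (a i).testBit k = true) :
    ¬ ∃ t : Fin n → ℕ, (∀ i, a i ≤ t i) ∧
      nimSum (List.ofFn t) = 0 ∧
      nimSum (List.ofFn fun i => t i - a i) = 0 := by
  rintro ⟨t, hle, ht, hs⟩
  -- each a i is ≡ 2^k mod 2^(k+1)
  have ha_mod : ∀ i, a i % 2 ^ (k + 1) = 2 ^ k := by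
    intro i
    obtain ⟨m, hm⟩ := hk i
    have hodd : m % 2 = 1 := by
      have := hbits i
      rw [hm, Nat.testBit_eq_decide_div_mod_eq, Nat.mul_div_cancel_left _
        (by positivity)] at this
      simpa using this
    rw [hm, pow_succ, Nat.mul_mod_mul_left, hodd, mul_one]
  -- σ has bit k+1 set
  have hsig : (nimSum (List.ofFn a)).testBit (k + 1) = true := by
    by_contra h
    exact hnotsmooth ⟨hbal, by simpa using h⟩
  -- convert nim-sum bit facts to ZMod 2 sums
  have sum_bz : ∀ (g : Fin n → ℕ) (j : ℕ),
      bz (nimSum (List.ofFn g)) j = ∑ i, bz (g i) j := by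
    intro g j
    rw [nimSum_bz, List.map_ofFn, List.sum_ofFn]
    rfl
  have H1 : ∑ i, bz (t i) (k + 1) = 0 := by
    rw [← sum_bz, ht]; simp [bz]
  have H2 : ∑ i, bz (t i - a i) (k + 1) = 0 := by
    rw [← sum_bz, hs]; simp [bz]
  have H3 : ∑ i, bz (t i - a i) k = 0 := by
    rw [← sum_bz, hs]; simp [bz]
  have H4 : ∑ i, bz (a i) (k + 1) = 1 := by
    rw [← sum_bz, bz_eq, hsig]; rfl
  have key : ∀ i, bz (t i) (k + 1) =
      bz (t i - a i) (k + 1) + bz (a i) (k + 1) + bz (t i - a i) k := by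
    intro i
    have := bz_add (t i - a i) (a i) k (ha_mod i)
    rwa [Nat.sub_add_cancel (hle i)] at this
  have : (0 : ZMod 2) = 1 := by
    calc (0 : ZMod 2) = ∑ i, bz (t i) (k + 1) := H1.symm
      _ = ∑ i, (bz (t i - a i) (k + 1) + bz (a i) (k + 1) + bz (t i - a i) k) :=
          Finset.sum_congr rfl fun i _ => key i
      _ = (∑ i, bz (t i - a i) (k + 1)) + (∑ i, bz (a i) (k + 1)) +
          (∑ i, bz (t i - a i) k) := by rw [Finset.sum_add_distrib, Finset.sum_add_distrib]
      _ = 1 := by rw [H2, H3, H4]; ring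
  exact absurd this (by decide)
end

section
/- Let n be even with n >= 2, S = {a_1, ..., a_n} balanced with at least two a_i positive, and suppose there exists i such that bit k of a_i is 0, where k is the maximum integer with 2^k dividing every a_j. Then there exist nonnegative integers t_1, ..., t_n with t_i >= a_i for all i such that the nim-sum of t_1, ..., t_n is 0 and the nim-sum of (t_1 - a_1), ..., (t_n - a_n) is 0. -/
open Finset

private def NS {n : ℕ} (f : Fin n → ℕ) : ℕ := nimSum (List.ofFn f)

private lemma NS_zero (f : Fin 0 → ℕ) : NS f = 0 := rfl

private lemma NS_succ {n : ℕ} (f : Fin (n+1) → ℕ) :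
    NS f = f 0 ^^^ NS (fun i => f i.succ) := by
  simp [NS, nimSum, List.ofFn_succ]

private lemma two_mul_xor_s14 (a b : ℕ) : (2*a) ^^^ (2*b) = 2*(a^^^b) := by
  apply Nat.eq_of_testBit_eq
  intro i
  rw [Nat.testBit_xor]
  cases i with
  | zero =>
      have e1 : (2*a) % 2 = 0 := by omega
      have e2 : (2*b) % 2 = 0 := by omega
      have e3 : (2*(a^^^b)) % 2 = 0 := by omega
      simp [e1, e2, e3]
  | succ i =>
      have h1 : (2*a)/2 = a := by omega
      have h2 : (2*b)/2 = b := by omega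
      have h4 : (2*(a^^^b))/2 = a ^^^ b := by omega
      rw [Nat.testBit_add_one, Nat.testBit_add_one, Nat.testBit_add_one, h1, h2, h4,
        Nat.testBit_xor]

private lemma add_xor_of_le_one (e y : ℕ) (he : e ≤ 1) : e + 2*y = e ^^^ 2*y := by
  interval_cases e
  · simp
  · apply Nat.eq_of_testBit_eq
    intro i
    rw [Nat.testBit_xor]
    cases i with
    | zero =>
        have e1 : (1 + 2*y) % 2 = 1 := by omega
        have e2 : (2*y) % 2 = 0 := by omega
        simp [e1, e2]
    | succ i =>
        have h1 : (1 + 2*y)/2 = y := by omega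
        have h2 : (2*y)/2 = y := by omega
        have h3 : (1:ℕ)/2 = 0 := by norm_num
        rw [Nat.testBit_add_one, Nat.testBit_add_one, Nat.testBit_add_one, h1, h2, h3]
        simp

private lemma xor01 (x y : ℕ) (hx : x ≤ 1) (hy : y ≤ 1) : x ^^^ y = (x + y) % 2 := by
  interval_cases x <;> interval_cases y <;> rfl

private lemma NS_xor {n : ℕ} (f g : Fin n → ℕ) :
    NS (fun i => f i ^^^ g i) = NS f ^^^ NS g := by
  induction n with
  | zero => simp [NS_zero]
  | succ n ih =>
      rw [NS_succ, NS_succ f, NS_succ g, ih]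
      rw [Nat.xor_assoc, Nat.xor_assoc]
      congr 1
      rw [← Nat.xor_assoc, ← Nat.xor_assoc, Nat.xor_comm (NS fun i => f i.succ) (g 0)]

private lemma NS_two_mul {n : ℕ} (f : Fin n → ℕ) :
    NS (fun i => 2 * f i) = 2 * NS f := by
  induction n with
  | zero => simp [NS_zero]
  | succ n ih => rw [NS_succ, NS_succ f, ih, two_mul_xor_s14]

private lemma NS_parity {n : ℕ} (f : Fin n → ℕ) (hf : ∀ i, f i ≤ 1) :
    NS f = (∑ i, f i) % 2 := by
  induction n with
  | zero => simp [NS_zero]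
  | succ n ih =>
      rw [NS_succ, ih _ (fun i => hf i.succ), Fin.sum_univ_succ]
      have h0 : f 0 ≤ 1 := hf 0
      have h1 : (∑ i : Fin n, f i.succ) % 2 ≤ 1 := by omega
      rw [xor01 _ _ h0 h1]
      omega

private lemma NS_pow_mul {n : ℕ} (k : ℕ) (f : Fin n → ℕ) :
    NS (fun i => 2^k * f i) = 2^k * NS f := by
  induction k with
  | zero => simp
  | succ k ih =>
      have : (fun i => 2^(k+1) * f i) = fun i => 2 * (2^k * f i) := by
        funext i; ring
      rw [this, NS_two_mul, ih, pow_succ]; ring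

private lemma NS_eq {n : ℕ} (f : Fin n → ℕ) : NS f = nimSum (List.ofFn f) := rfl


private lemma key_base {n : ℕ} (b c : Fin n → ℕ) (hz : ∀ i, b i = 0) (hc : ∀ i, c i ≤ 1)
    (hpar : #(univ.filter fun i => b i % 2 ≠ c i) % 2 = 0) :
    ∃ d : Fin n → ℕ, NS d = 0 ∧ NS (fun i => b i + c i + d i) = 0 := by
  have hAc : (univ.filter fun i => b i % 2 ≠ c i) = univ.filter fun i => c i = 1 := by
    ext i
    have := hc i
    simp only [mem_filter, mem_univ, true_and, hz i]
    omega
  have hsumc : ∑ i, c i = #(univ.filter fun i => c i = 1) := by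
    rw [Finset.card_filter]
    apply Finset.sum_congr rfl
    intro i _
    have := hc i
    by_cases h : c i = 1 <;> simp [h] <;> omega
  have hNSc : NS c = 0 := by
    rw [NS_parity c hc, hsumc, ← hAc, hpar]
  refine ⟨c, hNSc, ?_⟩
  have ht : (fun i => b i + c i + c i) = fun i => 2 * c i := by
    funext i; rw [hz i]; ring
  rw [ht, NS_two_mul, hNSc, mul_zero]

private lemma key : ∀ (N n : ℕ) (b c : Fin n → ℕ),
    n % 2 = 0 →
    (∑ i, b i) ≤ N →
    (∀ i, c i ≤ 1) →
    #(univ.filter fun i => b i % 2 ≠ c i) % 2 = 0 →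
    2 ≤ #(univ.filter fun i => b i % 2 ≠ c i) →
    #(univ.filter fun i => b i % 2 ≠ c i) + 2 ≤ n →
    ∃ d : Fin n → ℕ, NS d = 0 ∧ NS (fun i => b i + c i + d i) = 0 := by
  intro N
  induction N with
  | zero =>
      intro n b c hn hsum hc hpar h2 hn2
      refine key_base b c (fun i => ?_) hc hpar
      have h0 : ∑ i, b i = 0 := Nat.le_zero.mp hsum
      exact (Finset.sum_eq_zero_iff.mp h0) i (mem_univ i)
  | succ N ih =>
      intro n b c hn hsum hc hpar h2 hn2
      by_cases hz : ∀ i, b i = 0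
      · exact key_base b c hz hc hpar
      · push_neg at hz
        obtain ⟨i0, hi0⟩ := hz
        set A : Finset (Fin n) := univ.filter (fun i => b i % 2 ≠ c i) with hA
        set F : Finset (Fin n) := univ.filter (fun i => b i % 2 = c i ∧ (b i / 2) % 2 ≠ c i)
          with hF
        have hFA : Disjoint F A := by
          rw [Finset.disjoint_left]
          intro x hxF hxA
          rw [hF, mem_filter] at hxF
          rw [hA, mem_filter] at hxA
          exact hxA.2 hxF.2.1
        have hSF_card : #F + #A ≤ n := by
          have := Finset.card_union_of_disjoint hFA
          have h2 := Finset.card_le_univ (F ∪ A)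
          rw [Fintype.card_fin] at h2
          omega
        -- choose S ⊆ A
        set s : ℕ := if #F = 0 then 2 else if #F = 1 then 1 else #F % 2 with hs
        have hsle : s ≤ #A := by
          have : s ≤ 2 := by rw [hs]; split_ifs <;> omega
          omega
        obtain ⟨S, hSA, hScard⟩ := Finset.exists_subset_card_eq hsle
        -- j ∉ A
        have hjex : ∃ j, j ∉ A := by
          by_contra hco
          push_neg at hco
          have : (univ : Finset (Fin n)) ⊆ A := fun x _ => hco x
          have hcc := Finset.card_le_card this
          rw [Finset.card_univ, Fintype.card_fin] at hcc
          omega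
        obtain ⟨j, hjA⟩ := hjex
        -- definitions
        set δA : Fin n → ℕ := fun i => if i ∈ S then 1 - (b i / 2) % 2 else (b i / 2) % 2
          with hδA
        set P : ℕ := (∑ i ∈ A, δA i) % 2 with hP
        set δ : Fin n → ℕ := fun i => if i ∈ A then δA i else if i = j then P else 0 with hδ
        have hδ1 : ∀ i, δ i ≤ 1 := by
          intro i
          rw [hδ, hδA]
          dsimp only
          split_ifs <;> omega
        set γ : Fin n → ℕ := fun i => (b i % 2 + c i + δ i) / 2 with hγ
        have hγ1 : ∀ i, γ i ≤ 1 := by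
          intro i
          rw [hγ]
          have := hc i
          have := hδ1 i
          dsimp only
          omega
        have hmemA : ∀ i, i ∈ A ↔ b i % 2 ≠ c i := by
          intro i; rw [hA, mem_filter]; simp
        have hγA : ∀ i ∈ A, γ i = δ i := by
          intro i hi
          rw [hγ]
          have h1 : b i % 2 ≠ c i := (hmemA i).mp hi
          have := hc i
          have := hδ1 i
          dsimp only
          omega
        have hγnA : ∀ i ∉ A, γ i = c i := by
          intro i hi
          rw [hγ]
          have h1 : b i % 2 = c i := by
            by_contra hco
            exact hi ((hmemA i).mpr hco)
          have := hc i
          have := hδ1 i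
          dsimp only
          omega
        -- value of δ on A
        have hδonA : ∀ i ∈ A, δ i = δA i := by
          intro i hi; rw [hδ]; simp [hi]
        have hδonS : ∀ i ∈ S, δ i = 1 - (b i / 2) % 2 := by
          intro i hi
          rw [hδonA i (hSA hi), hδA]
          simp [hi]
        have hδonAS : ∀ i ∈ A, i ∉ S → δ i = (b i / 2) % 2 := by
          intro i hi hiS
          rw [hδonA i hi, hδA]
          simp [hiS]
        -- next-level active set
        have hA' : (univ.filter fun i => (b i / 2) % 2 ≠ γ i) = S ∪ F := by
          ext i
          simp only [mem_filter, mem_univ, true_and, mem_union]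
          by_cases hiA : i ∈ A
          · rw [hγA i hiA]
            have hFi : i ∉ F := Finset.disjoint_right.mp hFA hiA
            by_cases hiS : i ∈ S
            · rw [hδonS i hiS]
              simp only [hiS, true_or, iff_true]
              omega
            · rw [hδonAS i hiA hiS]
              simp only [hiS, false_or]
              constructor
              · intro h; exact absurd rfl h
              · intro h; exact absurd h hFi
          · rw [hγnA i hiA]
            have hbc : b i % 2 = c i := by
              by_contra hco
              exact hiA ((hmemA i).mpr hco)
            constructor
            · intro h
              right
              rw [hF, mem_filter]
              exact ⟨mem_univ i, hbc, h⟩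
            · intro h
              rcases h with h | h
              · exact absurd (hSA h) hiA
              · rw [hF, mem_filter] at h
                exact h.2.2
        have hA'card : #(univ.filter fun i => (b i / 2) % 2 ≠ γ i) = s + #F := by
          rw [hA', Finset.card_union_of_disjoint (Finset.disjoint_of_subset_left hSA hFA.symm),
            hScard]
        -- recursion hypotheses
        have hsum' : ∑ i, b i / 2 ≤ N := by
          have hlt : ∑ i, b i / 2 < ∑ i, b i := by
            apply Finset.sum_lt_sum (fun i _ => Nat.div_le_self _ _)
            exact ⟨i0, mem_univ i0, Nat.div_lt_self (Nat.pos_of_ne_zero hi0) one_lt_two⟩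
          omega
        have hFpar : (s + #F) % 2 = 0 := by
          rw [hs]
          split_ifs <;> omega
        have hFlo : 2 ≤ s + #F := by
          rw [hs]; split_ifs <;> omega
        have hFhi : s + #F + 2 ≤ n := by
          have hn4 : 4 ≤ n := by omega
          rw [hs]
          split_ifs with e1 e2
          · omega
          · omega
          · -- #F ≥ 2 : s = #F % 2
            rcases Nat.even_or_odd #F with he | ho
            · have : #F % 2 = 0 := Nat.even_iff.mp he
              omega
            · have h1 : #F % 2 = 1 := Nat.odd_iff.mp ho
              -- #F + #A ≤ n, #A ≥ 2 even-ish, n even, #F odd ⇒ #F ≤ n - 3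
              omega
        obtain ⟨d', hd'1, hd'2⟩ := ih n (fun i => b i / 2) γ hn hsum' hγ1
          (by rw [hA'card]; exact hFpar) (by rw [hA'card]; exact hFlo)
          (by rw [hA'card]; exact hFhi)
        -- assemble d
        refine ⟨fun i => δ i + 2 * d' i, ?_, ?_⟩
        · have hd : (fun i => δ i + 2 * d' i) = fun i => δ i ^^^ 2 * d' i := by
            funext i
            exact add_xor_of_le_one _ _ (hδ1 i)
          rw [hd, NS_xor, NS_two_mul, hd'1, mul_zero, Nat.xor_zero, NS_parity δ hδ1]
          -- ∑ δ = ∑_A δA + P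
          have hsplit : ∑ i, δ i = ∑ i ∈ A, δ i + ∑ i ∈ Aᶜ, δ i :=
            (Finset.sum_add_sum_compl A δ).symm
          have hA1 : ∑ i ∈ A, δ i = ∑ i ∈ A, δA i :=
            Finset.sum_congr rfl (fun i hi => hδonA i hi)
          have hA2 : ∑ i ∈ Aᶜ, δ i = P := by
            rw [Finset.sum_eq_single_of_mem j (Finset.mem_compl.mpr hjA)]
            · rw [hδ]; simp [hjA]
            · intro k hk hkj
              rw [hδ]
              have hkA : k ∉ A := Finset.mem_compl.mp hk
              simp [hkA, hkj]
          rw [hsplit, hA1, hA2, hP]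
          omega
        · have ht : (fun i => b i + c i + (δ i + 2 * d' i)) =
              fun i => (b i % 2 + c i + δ i) % 2 + 2 * (b i / 2 + γ i + d' i) := by
            funext i
            rw [hγ]
            dsimp only
            omega
          have ht2 : (fun i => (b i % 2 + c i + δ i) % 2 + 2 * (b i / 2 + γ i + d' i)) =
              fun i => (b i % 2 + c i + δ i) % 2 ^^^ 2 * (b i / 2 + γ i + d' i) := by
            funext i
            exact add_xor_of_le_one _ _ (by omega)
          rw [ht, ht2, NS_xor, NS_two_mul, hd'2, mul_zero, Nat.xor_zero,
            NS_parity _ (fun i => by omega)]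
          -- parity of ∑ (b%2 + c + δ) is 0
          have e1 : ∀ i, (b i % 2 + c i) % 2 = if b i % 2 ≠ c i then 1 else 0 := by
            intro i
            have := hc i
            by_cases h : b i % 2 = c i
            · simp [h]; omega
            · simp [h]; omega
          have e2 : ∑ i, (b i % 2 + c i) % 2 = #A := by
            rw [hA, Finset.card_filter]
            exact Finset.sum_congr rfl (fun i _ => e1 i)
          have e3 : (∑ i, (b i % 2 + c i + δ i)) % 2 = 0 := by
            have q1 : (∑ i, (b i % 2 + c i + δ i)) = ∑ i, (b i % 2 + c i) + ∑ i, δ i := by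
              rw [← Finset.sum_add_distrib]
            have q2 : (∑ i, (b i % 2 + c i)) % 2 = (∑ i, (b i % 2 + c i) % 2) % 2 :=
              Finset.sum_nat_mod _ _ _
            have q3 : (∑ i, δ i) % 2 = 0 := by
              have hsplit : ∑ i, δ i = ∑ i ∈ A, δ i + ∑ i ∈ Aᶜ, δ i :=
                (Finset.sum_add_sum_compl A δ).symm
              have hA1 : ∑ i ∈ A, δ i = ∑ i ∈ A, δA i :=
                Finset.sum_congr rfl (fun i hi => hδonA i hi)
              have hA2 : ∑ i ∈ Aᶜ, δ i = P := by
                rw [Finset.sum_eq_single_of_mem j (Finset.mem_compl.mpr hjA)]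
                · rw [hδ]; simp [hjA]
                · intro k hk hkj
                  rw [hδ]
                  have hkA : k ∉ A := Finset.mem_compl.mp hk
                  simp [hkA, hkj]
              rw [hsplit, hA1, hA2, hP]
              omega
            rw [q1]
            omega
          have q4 : (∑ i, (b i % 2 + c i + δ i) % 2) % 2
              = (∑ i, (b i % 2 + c i + δ i)) % 2 := (Finset.sum_nat_mod _ _ _).symm
          rw [q4, e3]


private lemma testBit_pow_mul (k x : ℕ) : (2^k * x).testBit k = decide (x % 2 = 1) := by
  have h1 : 2^k * x = x <<< k := by rw [Nat.shiftLeft_eq]; ring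
  rw [h1, Nat.testBit_shiftLeft]
  simp

private lemma NS_mod_two {n : ℕ} (f : Fin n → ℕ) :
    NS f % 2 = (∑ i, f i % 2) % 2 := by
  have h1 : f = fun i => (f i % 2) + 2 * (f i / 2) := by
    funext i; omega
  have h2 : (fun i => (f i % 2) + 2 * (f i / 2)) = fun i => (f i % 2) ^^^ 2 * (f i / 2) := by
    funext i; exact add_xor_of_le_one _ _ (by omega)
  conv_lhs => rw [h1, h2]
  rw [NS_xor, NS_two_mul]
  have h3 : NS (fun i => f i % 2) = (∑ i, f i % 2) % 2 :=
    NS_parity _ (fun i => by omega)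
  rw [← add_xor_of_le_one _ _ (by rw [h3]; omega)]
  omega

theorem stmt14 (n : ℕ) (heven : Even n) (hn : 2 ≤ n) (a : Fin n → ℕ)
    (hpos : ∃ i j, i ≠ j ∧ 0 < a i ∧ 0 < a j)
    (k : ℕ) (hk : ∀ i, 2 ^ k ∣ a i) (hkmax : ¬ ∀ i, 2 ^ (k + 1) ∣ a i)
    (hbal : (nimSum (List.ofFn a)).testBit k = false)
    (hzero : ∃ i, (a i).testBit k = false) :
    ∃ t : Fin n → ℕ, (∀ i, a i ≤ t i) ∧
      nimSum (List.ofFn t) = 0 ∧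
      nimSum (List.ofFn fun i => t i - a i) = 0 := by
  set b : Fin n → ℕ := fun i => a i / 2^k with hb
  have hab : ∀ i, a i = 2^k * b i := by
    intro i
    rw [hb]
    exact (Nat.mul_div_cancel' (hk i)).symm
  -- nimSum a = 2^k * NS b
  have hNSa : nimSum (List.ofFn a) = 2^k * NS b := by
    rw [← NS_eq]
    have : a = fun i => 2^k * b i := funext hab
    rw [this, NS_pow_mul]
  -- parity of #A
  have hA0 : #(univ.filter fun i : Fin n => b i % 2 ≠ (fun _ : Fin n => 0) i) =
      ∑ i, b i % 2 := by
    rw [Finset.card_filter]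
    apply Finset.sum_congr rfl
    intro i _
    by_cases h : b i % 2 = 0
    · simp [h]
    · have : b i % 2 = 1 := by omega
      simp [this]
  have hpar : (∑ i, b i % 2) % 2 = 0 := by
    have h1 : (2^k * NS b).testBit k = false := by rw [← hNSa]; exact hbal
    rw [testBit_pow_mul] at h1
    have h2 : NS b % 2 ≠ 1 := by simpa using h1
    have h3 := NS_mod_two b
    omega
  -- some odd b
  have hodd : ∃ i, b i % 2 = 1 := by
    by_contra hco
    push_neg at hco
    apply hkmax
    intro i
    have h1 : b i % 2 = 0 := by have := hco i; omega
    have hbi : b i = 2 * (b i / 2) := by omega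
    have h2 : a i = 2^(k+1) * (b i / 2) := by
      rw [hab i, pow_succ]
      calc 2^k * b i = 2^k * (2 * (b i / 2)) := congrArg _ hbi
      _ = 2^k * 2 * (b i / 2) := by ring
    exact ⟨b i / 2, by rw [h2]⟩
  -- some even b
  have heven' : ∃ i, b i % 2 = 0 := by
    obtain ⟨i, hi⟩ := hzero
    refine ⟨i, ?_⟩
    rw [hab i, testBit_pow_mul] at hi
    simpa using hi
  -- bounds on the card
  obtain ⟨io, hio⟩ := hodd
  obtain ⟨ie, hie⟩ := heven'
  have hcard_le : (∑ i, b i % 2) ≤ n := by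
    calc (∑ i, b i % 2) ≤ ∑ i : Fin n, 1 := Finset.sum_le_sum (fun i _ => by omega)
    _ = n := by simp
  have hlo : 1 ≤ ∑ i, b i % 2 := by
    have h5 : b io % 2 ≤ ∑ i, b i % 2 :=
      Finset.single_le_sum (f := fun i => b i % 2) (fun i _ => Nat.zero_le _) (mem_univ io)
    omega
  have hhi : (∑ i, b i % 2) < n := by
    by_contra hco
    push_neg at hco
    have hall : ∀ i ∈ (univ : Finset (Fin n)), b i % 2 = 1 := by
      by_contra hco2
      push_neg at hco2
      obtain ⟨i1, _, hi1⟩ := hco2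
      have h1 : b i1 % 2 = 0 := by omega
      have : (∑ i, b i % 2) < ∑ i : Fin n, 1 := by
        apply Finset.sum_lt_sum (fun i _ => by omega)
        exact ⟨i1, mem_univ i1, by omega⟩
      simp at this
      omega
    have := hall ie (mem_univ ie)
    omega
  have hneven : n % 2 = 0 := Nat.even_iff.mp heven
  -- apply key
  obtain ⟨d, hd1, hd2⟩ := key (∑ i, b i) n b (fun _ => 0) hneven le_rfl (fun i => by norm_num)
    (by rw [hA0]; omega) (by rw [hA0]; omega) (by rw [hA0]; omega)
  refine ⟨fun i => 2^k * (b i + d i), ?_, ?_, ?_⟩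
  · intro i
    rw [hab i]
    exact Nat.mul_le_mul_left _ (by omega)
  · rw [← NS_eq, NS_pow_mul]
    have h1 : (fun i => b i + d i) = fun i => b i + (fun _ : Fin n => 0) i + d i := by
      funext i; show b i + d i = b i + 0 + d i; omega
    rw [h1, hd2, mul_zero]
  · have h1 : (fun i => 2^k * (b i + d i) - a i) = fun i => 2^k * d i := by
      funext i
      rw [hab i, Nat.mul_add]
      omega
    rw [← NS_eq, h1, NS_pow_mul, hd1, mul_zero]
end

section
/- Let S = {a_1, ..., a_n} (n >= 2, at least two a_i positive) be a multiset of nonnegative integers. There exist nonnegative integers t_1, ..., t_n with t_i >= a_i such that the nim-sum of t_1, ..., t_n and the nim-sum of (t_1 - a_1), ..., (t_n - a_n) are both 0, if and only if: either n is odd and S is balanced; or n is even and (S is balanced and some a_i has a 0-bit in position k, or S is smooth and n >= 4, or S is even). -/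
namespace St16

@[simp] lemma nimSum_nil : nimSum [] = 0 := rfl
@[simp] lemma nimSum_cons (x : ℕ) (l : List ℕ) : nimSum (x :: l) = x ^^^ nimSum l := rfl

def nsF {n : ℕ} (f : Fin n → ℕ) : ℕ := nimSum (List.ofFn f)

@[simp] lemma nsF_zero_ary (f : Fin 0 → ℕ) : nsF f = 0 := rfl

lemma nsF_succ {n : ℕ} (f : Fin (n+1) → ℕ) : nsF f = f 0 ^^^ nsF (fun i => f i.succ) := by
  simp [nsF, List.ofFn_succ]

lemma xor_le_one {a b : ℕ} (ha : a ≤ 1) (hb : b ≤ 1) : a ^^^ b ≤ 1 := by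
  interval_cases a <;> interval_cases b <;> decide

lemma xor_div_two (x y : ℕ) : (x ^^^ y) / 2 = x / 2 ^^^ y / 2 := by
  apply Nat.eq_of_testBit_eq
  intro j
  have h1 : ∀ z : ℕ, (z / 2).testBit j = z.testBit (j + 1) := fun z => (Nat.testBit_succ z j).symm
  rw [h1, Nat.testBit_xor, Nat.testBit_xor, h1, h1]

lemma xor_of_le_one {a b : ℕ} (ha : a ≤ 1) (hb : b ≤ 1) : a ^^^ b = (a + b) % 2 := by
  interval_cases a <;> interval_cases b <;> decide

lemma two_mul_add_xor (x y a b : ℕ) (ha : a ≤ 1) (hb : b ≤ 1) :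
    (2*x + a) ^^^ (2*y + b) = 2 * (x ^^^ y) + (a ^^^ b) := by
  have hm : ((2*x + a) ^^^ (2*y + b)) % 2 = ((2*x + a) + (2*y + b)) % 2 := Nat.xor_mod_two_eq
  have hd : ((2*x + a) ^^^ (2*y + b)) / 2 = (2*x + a) / 2 ^^^ (2*y + b) / 2 := xor_div_two ..
  have e1 : (2*x + a) / 2 = x := by omega
  have e2 : (2*y + b) / 2 = y := by omega
  rw [e1, e2] at hd
  have e3 : a ^^^ b = (a + b) % 2 := xor_of_le_one ha hb
  omega

lemma nsF_le_one {n : ℕ} {f : Fin n → ℕ} (h : ∀ i, f i ≤ 1) : nsF f ≤ 1 := by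
  induction n with
  | zero => simp
  | succ n ih => rw [nsF_succ]; exact xor_le_one (h 0) (ih (fun i => h i.succ))

lemma nsF_eq {n : ℕ} (f : Fin n → ℕ) :
    nsF f = 2 * nsF (fun i => f i / 2) + nsF (fun i => f i % 2) := by
  induction n with
  | zero => simp
  | succ n ih =>
      rw [nsF_succ, nsF_succ (fun i => f i / 2), nsF_succ (fun i => f i % 2)]
      have hf : f 0 = 2 * (f 0 / 2) + f 0 % 2 := by omega
      conv_lhs => rw [hf, ih (fun i => f i.succ)]
      exact two_mul_add_xor _ _ _ _ (by omega) (nsF_le_one (fun i => by show _ % 2 ≤ 1; omega))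

lemma nsF_parity {n : ℕ} {f : Fin n → ℕ} (h : ∀ i, f i ≤ 1) :
    nsF f = (∑ i, f i) % 2 := by
  induction n with
  | zero => simp
  | succ n ih =>
      rw [nsF_succ, Fin.sum_univ_succ, ih (fun i => h i.succ),
        xor_of_le_one (h 0) (by omega)]
      omega

lemma nsF_zero {n : ℕ} : nsF (fun _ : Fin n => 0) = 0 := by
  rw [nsF_parity (fun _ => by omega)]; simp

lemma nsF_mod_two {n : ℕ} (f : Fin n → ℕ) : nsF f % 2 = (∑ i, f i) % 2 := by
  have h := nsF_eq f
  have h2 := nsF_parity (f := fun i => f i % 2) (fun i => by show _ % 2 ≤ 1; omega)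
  have h3 : (∑ i, f i % 2) % 2 = (∑ i, f i) % 2 := (Finset.sum_nat_mod ..).symm
  have h4 : nsF (fun i => f i % 2) ≤ 1 := nsF_le_one (fun i => by show _ % 2 ≤ 1; omega)
  have h5 : (∑ i : Fin n, (fun i => f i % 2) i) = ∑ i, f i % 2 := rfl
  rw [h5] at h2
  omega

lemma nsF_div_two {n : ℕ} (f : Fin n → ℕ) : nsF f / 2 = nsF (fun i => f i / 2) := by
  have h := nsF_eq f
  have h4 : nsF (fun i => f i % 2) ≤ 1 := nsF_le_one (fun i => by show _ % 2 ≤ 1; omega)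
  omega

lemma nsF_eq_zero_iff {n : ℕ} (f : Fin n → ℕ) :
    nsF f = 0 ↔ nsF (fun i => f i / 2) = 0 ∧ nsF (fun i => f i % 2) = 0 := by
  have h := nsF_eq f
  omega


def Solvable {n : ℕ} (a : Fin n → ℕ) : Prop :=
  ∃ b : Fin n → ℕ, nsF b = 0 ∧ nsF (fun i => a i + b i) = 0

def Qgen {n : ℕ} (a : Fin n → ℕ) : Prop :=
  nsF a = 0 ∨ ∃ k, (∀ i, 2^k ∣ a i) ∧ (∃ i, (a i).testBit k = true) ∧
    (nsF a).testBit k = false ∧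
    (Odd n ∨ (∃ i, (a i).testBit k = false) ∨ ((nsF a).testBit (k+1) = false ∧ 4 ≤ n))

lemma tb0_false (x : ℕ) : x.testBit 0 = false ↔ x % 2 = 0 := by
  simp only [Nat.testBit_zero, decide_eq_false_iff_not]; omega

lemma tb0_true (x : ℕ) : x.testBit 0 = true ↔ x % 2 = 1 := by
  simp [Nat.testBit_zero]

lemma rec_back {n : ℕ} (a β : Fin n → ℕ) (hβ : ∀ i, β i ≤ 1) (h1 : nsF β = 0)
    (h2 : nsF (fun i => (a i + β i) % 2) = 0)
    (h3 : Solvable (fun i => (a i + β i) / 2)) :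
    Solvable a := by
  obtain ⟨b', hb1, hb2⟩ := h3
  refine ⟨fun i => 2 * b' i + β i, ?_, ?_⟩
  · rw [nsF_eq_zero_iff]
    constructor
    · have e : (fun i => (2 * b' i + β i) / 2) = b' := funext fun i => by have := hβ i; omega
      rw [e]; exact hb1
    · have e : (fun i => (2 * b' i + β i) % 2) = β := funext fun i => by have := hβ i; omega
      rw [e]; exact h1
  · rw [nsF_eq_zero_iff]
    constructor
    · have e : (fun i => (a i + (2 * b' i + β i)) / 2)
          = (fun i => (a i + β i) / 2 + b' i) := funext fun i => by have := hβ i; omega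
      rw [e]; exact hb2
    · have e : (fun i => (a i + (2 * b' i + β i)) % 2)
          = (fun i => (a i + β i) % 2) := funext fun i => by have := hβ i; omega
      rw [e]; exact h2

lemma rec_fwd {n : ℕ} (a : Fin n → ℕ) (h : Solvable a) :
    ∃ β : Fin n → ℕ, (∀ i, β i ≤ 1) ∧ nsF β = 0 ∧ nsF (fun i => (a i + β i) % 2) = 0 ∧
      Solvable (fun i => (a i + β i) / 2) := by
  obtain ⟨b, hb1, hb2⟩ := h
  rw [nsF_eq_zero_iff] at hb1 hb2
  refine ⟨fun i => b i % 2, fun i => by show _ % 2 ≤ 1; omega, hb1.2, ?_, ?_⟩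
  · have e : (fun i => (a i + b i % 2) % 2) = (fun i => (a i + b i) % 2) :=
      funext fun i => by omega
    rw [e]; exact hb2.2
  · refine ⟨fun i => b i / 2, hb1.1, ?_⟩
    have e : (fun i => (a i + b i % 2) / 2 + b i / 2) = (fun i => (a i + b i) / 2) :=
      funext fun i => by omega
    rw [e]; exact hb2.1

lemma nec0 {n : ℕ} {a : Fin n → ℕ} (h : Solvable a) : (∑ i, a i) % 2 = 0 := by
  obtain ⟨b, hb1, hb2⟩ := h
  have h1 := nsF_mod_two b
  have h2 := nsF_mod_two (fun i => a i + b i)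
  rw [hb1] at h1; rw [hb2] at h2
  have h3 : (∑ i : Fin n, (fun i => a i + b i) i) = ∑ i, a i + ∑ i, b i := by
    show (∑ i : Fin n, (a i + b i)) = _
    rw [Finset.sum_add_distrib]
  rw [h3] at h2
  omega

lemma qgen_shift {n : ℕ} (a : Fin n → ℕ) (hev : ∀ i, a i % 2 = 0) :
    Qgen (fun i => a i / 2) ↔ Qgen a := by
  have hmod : (fun i => a i % 2) = (fun _ : Fin n => 0) := funext fun i => hev i
  have hσ : nsF a = 2 * nsF (fun i => a i / 2) := by
    have := nsF_eq a
    rw [hmod, nsF_zero] at this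
    omega
  have hdiv : nsF a / 2 = nsF (fun i => a i / 2) := by omega
  have htb : ∀ (x k : ℕ), x.testBit (k+1) = (x/2).testBit k := fun x k => Nat.testBit_succ x k
  have htbσ : ∀ k : ℕ, (nsF a).testBit (k+1) = (nsF (fun i => a i / 2)).testBit k := by
    intro k; rw [htb, hdiv]
  constructor
  · rintro (h0 | ⟨k, hdvd, ⟨i0, hi0⟩, hbal, hthird⟩)
    · left; omega
    · right
      refine ⟨k + 1, fun i => ?_, ⟨i0, ?_⟩, ?_, ?_⟩
      · have h1 : (2:ℕ)^k ∣ a i / 2 := hdvd i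
        have h2 : a i = 2 * (a i / 2) := by have := hev i; omega
        rw [h2, pow_succ, mul_comm (2^k) 2]
        exact Nat.mul_dvd_mul_left 2 h1
      · rw [htb]; exact hi0
      · rw [htbσ]; exact hbal
      · rcases hthird with h | ⟨i1, hi1⟩ | ⟨hsm, hn4⟩
        · exact Or.inl h
        · exact Or.inr (Or.inl ⟨i1, by rw [htb]; exact hi1⟩)
        · exact Or.inr (Or.inr ⟨by rw [htbσ]; exact hsm, hn4⟩)
  · rintro (h0 | ⟨k, hdvd, ⟨i0, hi0⟩, hbal, hthird⟩)
    · left; omega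
    · cases k with
      | zero =>
          exfalso
          rw [tb0_true] at hi0
          have := hev i0
          omega
      | succ k =>
          right
          refine ⟨k, fun i => ?_, ⟨i0, ?_⟩, ?_, ?_⟩
          · obtain ⟨m, hm⟩ := hdvd i
            refine ⟨m, ?_⟩
            show a i / 2 = 2^k * m
            rw [hm, pow_succ, mul_comm (2^k) 2, mul_assoc]
            omega
          · show ((a i0)/2).testBit k = true
            rw [← htb]; exact hi0
          · rw [← htbσ]; exact hbal
          · rcases hthird with h | ⟨i1, hi1⟩ | ⟨hsm, hn4⟩
            · exact Or.inl h
            · refine Or.inr (Or.inl ⟨i1, ?_⟩)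
              show ((a i1)/2).testBit k = false
              rw [← htb]; exact hi1
            · exact Or.inr (Or.inr ⟨by rw [← htbσ]; exact hsm, hn4⟩)

lemma nsF_two (f : Fin 2 → ℕ) : nsF f = f 0 ^^^ f 1 := by
  rw [nsF_succ, nsF_succ]
  show f 0 ^^^ (f (0:Fin 1).succ ^^^ nsF _) = _
  rw [nsF_zero_ary, Nat.xor_zero]
  rfl

lemma sum_split {n : ℕ} (a : Fin n → ℕ) :
    ∑ i, a i = 2 * (∑ i, a i / 2) + ∑ i, a i % 2 := by
  rw [Finset.mul_sum, ← Finset.sum_add_distrib]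
  exact Finset.sum_congr rfl (fun i _ => by omega)

lemma nec_aux : ∀ (s : ℕ) {n : ℕ} (a : Fin n → ℕ), (∑ i, a i) ≤ s → Solvable a → Qgen a := by
  intro s
  induction s with
  | zero =>
      intro n a hs _
      left
      have h0 : ∀ i, a i = 0 := by
        intro i
        have := Finset.single_le_sum (f := a) (fun i _ => Nat.zero_le _) (Finset.mem_univ i)
        omega
      have : a = (fun _ => 0) := funext h0
      rw [this]; exact nsF_zero
  | succ s ih =>
      intro n a hs hsolv
      by_cases hev : ∀ i, a i % 2 = 0
      · -- all even
        by_cases h0 : ∑ i, a i = 0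
        · left
          have h0' : ∀ i, a i = 0 := by
            intro i
            have := Finset.single_le_sum (f := a) (fun i _ => Nat.zero_le _) (Finset.mem_univ i)
            omega
          have : a = (fun _ => 0) := funext h0'
          rw [this]; exact nsF_zero
        · obtain ⟨β, hβ1, hβ2, hβ3, hβ4⟩ := rec_fwd a hsolv
          have he : (fun i => (a i + β i) / 2) = (fun i => a i / 2) := by
            funext i
            have h1 := hβ1 i
            have h2 := hev i
            -- need β i = 0 : from a even and (a i + β i) parity? not forced; but division:
            omega
          rw [he] at hβ4
          have hsum : 2 * (∑ i, a i / 2) = ∑ i, a i := by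
            have := sum_split a
            have h2 : ∑ i, a i % 2 = 0 := Finset.sum_eq_zero (fun i _ => hev i)
            omega
          have hle : (∑ i, a i / 2) ≤ s := by omega
          exact (qgen_shift a hev).mp (ih (fun i => a i / 2) hle hβ4)
      · -- some odd
        push_neg at hev
        obtain ⟨j0, hj0⟩ := hev
        have hj0' : a j0 % 2 = 1 := by omega
        have hSa : (∑ i, a i) % 2 = 0 := nec0 hsolv
        have hbal : (nsF a).testBit 0 = false := by
          rw [tb0_false]
          have := nsF_mod_two a
          omega
        rcases Nat.even_or_odd n with hne | hno
        · -- n even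
          by_cases hE : ∃ i, a i % 2 = 0
          · obtain ⟨e, he⟩ := hE
            right
            exact ⟨0, fun i => by simpa using one_dvd _, ⟨j0, (tb0_true _).mpr hj0'⟩, hbal,
              Or.inr (Or.inl ⟨e, (tb0_false _).mpr he⟩)⟩
          · push_neg at hE
            have hall : ∀ i, a i % 2 = 1 := fun i => by have := hE i; omega
            have hn1 : 1 ≤ n := j0.pos
            by_cases hn4 : 4 ≤ n
            · -- show smooth
              right
              refine ⟨0, fun i => by simpa using one_dvd _, ⟨j0, (tb0_true _).mpr hj0'⟩, hbal,
                Or.inr (Or.inr ⟨?_, hn4⟩)⟩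
              -- (nsF a).testBit 1 = false
              obtain ⟨β, hβ1, hβ2, hβ3, hβ4⟩ := rec_fwd a hsolv
              have hA : (∑ i, (a i + β i) / 2) % 2 = 0 := by
                have h1 := nec0 hβ4
                exact h1
              have hsplit : ∑ i, (a i + β i) / 2 = (∑ i, a i / 2) + ∑ i, β i := by
                rw [← Finset.sum_add_distrib]
                exact Finset.sum_congr rfl (fun i _ => by
                  have := hβ1 i; have := hall i; omega)
              have hβpar : (∑ i, β i) % 2 = 0 := by
                have := nsF_mod_two β
                omega
              have hH : (∑ i, a i / 2) % 2 = 0 := by omega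
              have h2 : (nsF a).testBit 1 = ((nsF a) / 2).testBit 0 := Nat.testBit_succ _ 0
              rw [h2, tb0_false, nsF_div_two]
              have := nsF_mod_two (fun i => a i / 2)
              have hb : (∑ i : Fin n, (fun i => a i / 2) i) = ∑ i, a i / 2 := rfl
              omega
            · -- n = 2 : show nsF a = 0
              have hn2 : n = 2 := by
                obtain ⟨r, hr⟩ := hne
                omega
              subst hn2
              obtain ⟨b, hb1, hb2⟩ := hsolv
              rw [nsF_two] at hb1 hb2
              have e1 : b 0 = b 1 := by
                have := xor_eq_zero_iff.mp hb1
                exact this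
              have e2 : a 0 + b 0 = a 1 + b 1 := xor_eq_zero_iff.mp hb2
              have e3 : a 0 = a 1 := by omega
              left
              rw [nsF_two, e3, Nat.xor_self]
        · right
          exact ⟨0, fun i => by simpa using one_dvd _, ⟨j0, (tb0_true _).mpr hj0'⟩, hbal,
            Or.inl hno⟩

lemma suf_step {n : ℕ} (a : Fin n → ℕ) (s : ℕ)
    (IH : ∀ (a' : Fin n → ℕ), (∑ i, a' i) ≤ s → Qgen a' → Solvable a')
    (B : Finset (Fin n))
    (hBcard : B.card % 2 = 0)
    (hSa : (∑ i, a i) % 2 = 0)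
    (hmeas : (∑ i, (a i + (if i ∈ B then 1 else 0)) / 2) ≤ s)
    (hbalA : (∑ i, (a i + (if i ∈ B then 1 else 0)) / 2) % 2 = 0)
    (hoddA : ∃ i, ((a i + (if i ∈ B then 1 else 0)) / 2) % 2 = 1)
    (hthA : Odd n ∨ ∃ i, ((a i + (if i ∈ B then 1 else 0)) / 2) % 2 = 0) :
    Solvable a := by
  have hβ1 : ∀ i, (fun i => if i ∈ B then (1:ℕ) else 0) i ≤ 1 := fun i => by
    show (if i ∈ B then (1:ℕ) else 0) ≤ 1
    split <;> omega
  have hβsum : (∑ i, (if i ∈ B then (1:ℕ) else 0)) = B.card := by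
    rw [Finset.sum_ite_mem, Finset.univ_inter, ← Finset.card_eq_sum_ones]
  refine rec_back a (fun i => if i ∈ B then 1 else 0) hβ1 ?_ ?_ ?_
  · rw [nsF_parity hβ1]
    change (∑ i, (if i ∈ B then (1:ℕ) else 0)) % 2 = 0
    rw [hβsum]; exact hBcard
  · rw [nsF_parity (fun i => by
      show (a i + (if i ∈ B then 1 else 0)) % 2 ≤ 1
      omega)]
    change (∑ i, (a i + (if i ∈ B then 1 else 0)) % 2) % 2 = 0
    rw [← Finset.sum_nat_mod, Finset.sum_add_distrib, hβsum]
    omega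
  · apply IH _ hmeas
    right
    refine ⟨0, fun i => by simpa using one_dvd _, ?_, ?_, ?_⟩
    · obtain ⟨i, hi⟩ := hoddA
      exact ⟨i, (tb0_true _).mpr hi⟩
    · rw [tb0_false]
      have h1 := nsF_mod_two (fun i => (a i + (if i ∈ B then 1 else 0)) / 2)
      have h2 : (∑ i, ((fun i => (a i + (if i ∈ B then 1 else 0)) / 2) i))
          = ∑ i, (a i + (if i ∈ B then 1 else 0)) / 2 := rfl
      rw [h2] at h1
      omega
    · rcases hthA with h | ⟨i, hi⟩
      · exact Or.inl h
      · exact Or.inr (Or.inl ⟨i, (tb0_false _).mpr hi⟩)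

lemma nsF_of_sum_zero {n : ℕ} (a : Fin n → ℕ) (h : ∑ i, a i = 0) : nsF a = 0 := by
  have h0 : ∀ i, a i = 0 := by
    intro i
    have := Finset.single_le_sum (f := a) (fun i _ => Nat.zero_le _) (Finset.mem_univ i)
    omega
  rw [funext h0]
  exact nsF_zero

lemma exists_notin {n : ℕ} (S : Finset (Fin n)) (h : S.card < n) : ∃ i, i ∉ S := by
  by_contra h1
  push_neg at h1
  have h2 : S = Finset.univ := Finset.eq_univ_iff_forall.mpr h1
  rw [h2, Finset.card_univ, Fintype.card_fin] at h
  omega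

lemma suf_aux : ∀ (s : ℕ) {n : ℕ} (a : Fin n → ℕ), (∑ i, a i) ≤ s → Qgen a → Solvable a := by
  intro s
  induction s with
  | zero =>
      intro n a hs _
      exact ⟨fun _ => 0, nsF_zero, by
        have h0 : (fun i => a i + 0) = (fun _ : Fin n => 0) := funext fun i => by
          have := Finset.single_le_sum (f := a) (fun i _ => Nat.zero_le _) (Finset.mem_univ i)
          omega
        rw [h0]; exact nsF_zero⟩
  | succ s ih =>
      intro n a hs hQ
      by_cases hs0 : nsF a = 0
      · exact ⟨fun _ => 0, nsF_zero, hs0⟩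
      rcases hQ with h0 | ⟨k, hdvd, ⟨j0, hj0⟩, hbal, hthird⟩
      · exact absurd h0 hs0
      by_cases hev : ∀ i, a i % 2 = 0
      · -- all entries even : halve everything
        have hQ' : Qgen (fun i => a i / 2) :=
          (qgen_shift a hev).mpr (Or.inr ⟨k, hdvd, ⟨j0, hj0⟩, hbal, hthird⟩)
        have hsum := sum_split a
        have hmz : ∑ i, a i % 2 = 0 := Finset.sum_eq_zero fun i _ => hev i
        have hpos : 0 < ∑ i, a i := by
          rcases Nat.eq_zero_or_pos (∑ i, a i) with h | h
          · exact absurd (nsF_of_sum_zero a h) hs0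
          · exact h
        have hle : ∑ i, a i / 2 ≤ s := by omega
        have hsolv2 := ih (fun i => a i / 2) hle hQ'
        refine rec_back a (fun _ => 0) (fun _ => Nat.zero_le 1) nsF_zero ?_ ?_
        · have h1 : (fun i => (a i + 0) % 2) = (fun _ : Fin n => 0) :=
            funext fun i => by have := hev i; omega
          rw [h1]; exact nsF_zero
        · exact hsolv2
      · -- some odd entry
        push_neg at hev
        obtain ⟨j1, hj1⟩ := hev
        have hk0 : k = 0 := by
          by_contra hk
          have h1 : (2:ℕ) ∣ a j1 := dvd_trans (dvd_pow_self 2 hk) (hdvd j1)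
          omega
        subst hk0
        have hbal0 : nsF a % 2 = 0 := by
          have := (tb0_false (nsF a)).mp hbal
          exact this
        have hSa : (∑ i, a i) % 2 = 0 := by have := nsF_mod_two a; omega
        have hsum := sum_split a
        obtain ⟨O, hmemO⟩ : ∃ O : Finset (Fin n), ∀ i, i ∈ O ↔ a i % 2 = 1 :=
          ⟨Finset.univ.filter (fun i => a i % 2 = 1), fun i => by simp⟩
        have hOsum : ∑ i, a i % 2 = O.card := by
          have h1 : ∀ i : Fin n, a i % 2 = (if i ∈ O then 1 else 0) := fun i => by
            by_cases h : i ∈ O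
            · rw [if_pos h]; exact (hmemO i).mp h
            · rw [if_neg h]
              have h2 : ¬ a i % 2 = 1 := fun hc => h ((hmemO i).mpr hc)
              omega
          rw [Finset.sum_congr rfl (fun i _ => h1 i), Finset.sum_ite_mem, Finset.univ_inter,
            ← Finset.card_eq_sum_ones]
        have hOcard : O.card % 2 = 0 := by omega
        have hj1O : j1 ∈ O := (hmemO j1).mpr (by omega)
        have hO2 : 2 ≤ O.card := by
          have h1 : 0 < O.card := Finset.card_pos.mpr ⟨j1, hj1O⟩
          omega
        obtain ⟨o1, ho1, o2, ho2, ho12⟩ := Finset.one_lt_card.mp (by omega : 1 < O.card)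
        have hao1 : a o1 % 2 = 1 := (hmemO o1).mp ho1
        have hao2 : a o2 % 2 = 1 := (hmemO o2).mp ho2
        have hHpos : 1 ≤ ∑ i, a i / 2 := by
          by_contra hcon
          push_neg at hcon
          have h1 : nsF (fun i => a i / 2) = 0 := nsF_of_sum_zero _ (by omega)
          have h2 := nsF_eq a
          rw [h1] at h2
          have h3 : nsF (fun i => a i % 2) ≤ 1 := nsF_le_one (fun i => by show _ % 2 ≤ 1; omega)
          omega
        have hAsum : ∀ B : Finset (Fin n), (∑ i, (a i + (if i ∈ B then 1 else 0)) / 2)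
            = (∑ i, a i / 2) + ∑ i ∈ B, a i % 2 := by
          intro B
          have h1 : ∀ i : Fin n, (a i + (if i ∈ B then 1 else 0)) / 2
              = a i / 2 + (if i ∈ B then a i % 2 else 0) := fun i => by
            split <;> omega
          rw [Finset.sum_congr rfl (fun i _ => h1 i), Finset.sum_add_distrib,
            Finset.sum_ite_mem, Finset.univ_inter]
        have hIH : ∀ (a' : Fin n → ℕ), (∑ i, a' i) ≤ s → Qgen a' → Solvable a' :=
          fun a' h1 h2 => ih a' h1 h2
        rcases Nat.even_or_odd n with hne | hno
        · -- n even
          by_cases hEex : ∃ e, e ∉ O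
          · obtain ⟨e, he⟩ := hEex
            have hae : a e % 2 = 0 := by
              have h2 : ¬ a e % 2 = 1 := fun hc => he ((hmemO e).mpr hc)
              omega
            have ho1e : o1 ≠ e := fun h => he (h ▸ ho1)
            have ho2e : o2 ≠ e := fun h => he (h ▸ ho2)
            have hc3 : ({o1, o2, e} : Finset (Fin n)).card = 3 := by
              rw [Finset.card_insert_of_notMem (by
                simp only [Finset.mem_insert, Finset.mem_singleton]
                push_neg
                exact ⟨ho12, ho1e⟩),
                Finset.card_insert_of_notMem (by simp only [Finset.mem_singleton]; exact ho2e),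
                Finset.card_singleton]
            have hn3 : 3 ≤ n := by
              have h1 := Finset.card_le_card (Finset.subset_univ ({o1, o2, e} : Finset (Fin n)))
              rw [hc3, Finset.card_univ, Fintype.card_fin] at h1
              exact h1
            have hn4 : 4 ≤ n := by
              obtain ⟨r, hr⟩ := hne
              omega
            by_cases hH : (∑ i, a i / 2) % 2 = 0
            · by_cases hp1 : ∃ i, a i / 2 % 2 = 1
              · obtain ⟨i1, hi1⟩ := hp1
                by_cases hp0 : ∃ i, a i / 2 % 2 = 0
                · obtain ⟨i0, hi0⟩ := hp0
                  have hA := hAsum (∅ : Finset (Fin n))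
                  rw [Finset.sum_empty] at hA
                  refine suf_step a s hIH ∅ (by simp) hSa (by omega) (by omega)
                    ⟨i1, ?_⟩ (Or.inr ⟨i0, ?_⟩)
                  · rw [if_neg (Finset.notMem_empty i1)]; omega
                  · rw [if_neg (Finset.notMem_empty i0)]; omega
                · push_neg at hp0
                  have hp0' : ∀ i, a i / 2 % 2 = 1 := fun i => by have := hp0 i; omega
                  have heB : e ∉ ({o1, o2} : Finset (Fin n)) := by
                    simp only [Finset.mem_insert, Finset.mem_singleton]
                    push_neg
                    exact ⟨fun h => ho1e h.symm, fun h => ho2e h.symm⟩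
                  have hA := hAsum {o1, o2}
                  rw [Finset.sum_pair ho12] at hA
                  refine suf_step a s hIH {o1, o2} (by rw [Finset.card_pair ho12]) hSa
                    (by omega) (by omega) ⟨e, ?_⟩ (Or.inr ⟨o1, ?_⟩)
                  · rw [if_neg heB]; have := hp0' e; omega
                  · rw [if_pos (Finset.mem_insert_self o1 {o2})]; have := hp0' o1; omega
              · push_neg at hp1
                have hp1' : ∀ i, a i / 2 % 2 = 0 := fun i => by have := hp1 i; omega
                have heB : e ∉ ({o1, o2} : Finset (Fin n)) := by
                  simp only [Finset.mem_insert, Finset.mem_singleton]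
                  push_neg
                  exact ⟨fun h => ho1e h.symm, fun h => ho2e h.symm⟩
                have hA := hAsum {o1, o2}
                rw [Finset.sum_pair ho12] at hA
                refine suf_step a s hIH {o1, o2} (by rw [Finset.card_pair ho12]) hSa
                  (by omega) (by omega) ⟨o1, ?_⟩ (Or.inr ⟨e, ?_⟩)
                · rw [if_pos (Finset.mem_insert_self o1 {o2})]; have := hp1' o1; omega
                · rw [if_neg heB]; have := hp1' e; omega
            · -- second-half sum odd : use {o1,e} or {o2,e}
              by_cases hm : (∃ i, ((a i + if i ∈ ({o1, e} : Finset (Fin n)) then 1 else 0) / 2) % 2 = 1)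
                  ∧ (∃ i, ((a i + if i ∈ ({o1, e} : Finset (Fin n)) then 1 else 0) / 2) % 2 = 0)
              · have hA := hAsum {o1, e}
                rw [Finset.sum_pair ho1e] at hA
                exact suf_step a s hIH {o1, e} (by rw [Finset.card_pair ho1e]) hSa
                  (by omega) (by omega) hm.1 (Or.inr hm.2)
              · have hA := hAsum {o2, e}
                rw [Finset.sum_pair ho2e] at hA
                obtain ⟨i3, hi3⟩ : ∃ i3, i3 ∉ ({o1, o2, e} : Finset (Fin n)) :=
                  exists_notin _ (by omega)
                simp only [Finset.mem_insert, Finset.mem_singleton] at hi3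
                push_neg at hi3
                obtain ⟨h31, h32, h3e⟩ := hi3
                have hi3B1 : i3 ∉ ({o1, e} : Finset (Fin n)) := by
                  simp only [Finset.mem_insert, Finset.mem_singleton]
                  push_neg
                  exact ⟨h31, h3e⟩
                have hi3B2 : i3 ∉ ({o2, e} : Finset (Fin n)) := by
                  simp only [Finset.mem_insert, Finset.mem_singleton]
                  push_neg
                  exact ⟨h32, h3e⟩
                have ho1B2 : o1 ∉ ({o2, e} : Finset (Fin n)) := by
                  simp only [Finset.mem_insert, Finset.mem_singleton]
                  push_neg
                  exact ⟨ho12, ho1e⟩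
                have ho2B1 : o2 ∉ ({o1, e} : Finset (Fin n)) := by
                  simp only [Finset.mem_insert, Finset.mem_singleton]
                  push_neg
                  exact ⟨fun h => ho12 h.symm, ho2e⟩
                rcases not_and_or.mp hm with h | h
                · -- all entries of the o1-variant are even
                  push_neg at h
                  have h1 := h o1
                  rw [if_pos (Finset.mem_insert_self o1 {e})] at h1
                  have h2 := h i3
                  rw [if_neg hi3B1] at h2
                  refine suf_step a s hIH {o2, e} (by rw [Finset.card_pair ho2e]) hSa
                    (by omega) (by omega) ⟨o1, ?_⟩ (Or.inr ⟨i3, ?_⟩)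
                  · rw [if_neg ho1B2]; omega
                  · rw [if_neg hi3B2]; omega
                · -- all entries of the o1-variant are odd
                  push_neg at h
                  have h1 := h o2
                  rw [if_neg ho2B1] at h1
                  have h2 := h i3
                  rw [if_neg hi3B1] at h2
                  refine suf_step a s hIH {o2, e} (by rw [Finset.card_pair ho2e]) hSa
                    (by omega) (by omega) ⟨i3, ?_⟩ (Or.inr ⟨o2, ?_⟩)
                  · rw [if_neg hi3B2]; omega
                  · rw [if_pos (Finset.mem_insert_self o2 {e})]; omega
          · -- all entries odd
            push_neg at hEex
            have hallodd : ∀ i, a i % 2 = 1 := fun i => (hmemO i).mp (hEex i)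
            rcases hthird with h | ⟨i4, hi4⟩ | ⟨hsm, hn4⟩
            · exact absurd h (by rwa [← Nat.not_odd_iff_even] at hne)
            · exfalso
              rw [tb0_false] at hi4
              have := hallodd i4
              omega
            · have hH : (∑ i, a i / 2) % 2 = 0 := by
                norm_num at hsm
                have h2 : (nsF a).testBit 1 = ((nsF a)/2).testBit 0 := Nat.testBit_succ (nsF a) 0
                rw [h2, tb0_false, nsF_div_two] at hsm
                have h3 := nsF_mod_two (fun i => a i / 2)
                have h4 : (∑ i : Fin n, (fun i => a i / 2) i) = ∑ i, a i / 2 := rfl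
                rw [h4] at h3
                omega
              obtain ⟨i3, hi3⟩ : ∃ i3, i3 ∉ ({o1, o2} : Finset (Fin n)) := by
                refine exists_notin _ ?_
                have := Finset.card_insert_le o1 ({o2} : Finset (Fin n))
                rw [Finset.card_singleton] at this
                omega
              simp only [Finset.mem_insert, Finset.mem_singleton] at hi3
              push_neg at hi3
              obtain ⟨h31, h32⟩ := hi3
              have h13 : o1 ≠ i3 := fun h => h31 h.symm
              have ho2B : o2 ∉ ({o1, i3} : Finset (Fin n)) := by
                simp only [Finset.mem_insert, Finset.mem_singleton]
                push_neg
                exact ⟨fun h => ho12 h.symm, fun h => h32 h.symm⟩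
              by_cases hpp : a o1 / 2 % 2 = a o2 / 2 % 2
              · have hA := hAsum {o1, i3}
                rw [Finset.sum_pair h13] at hA
                have hao3 := hallodd i3
                by_cases hc : a o1 / 2 % 2 = 0
                · refine suf_step a s hIH {o1, i3} (by rw [Finset.card_pair h13]) hSa
                    (by omega) (by omega) ⟨o1, ?_⟩ (Or.inr ⟨o2, ?_⟩)
                  · rw [if_pos (Finset.mem_insert_self o1 {i3})]; omega
                  · rw [if_neg ho2B]; omega
                · refine suf_step a s hIH {o1, i3} (by rw [Finset.card_pair h13]) hSa
                    (by omega) (by omega) ⟨o2, ?_⟩ (Or.inr ⟨o1, ?_⟩)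
                  · rw [if_neg ho2B]; omega
                  · rw [if_pos (Finset.mem_insert_self o1 {i3})]; omega
              · have hA := hAsum (∅ : Finset (Fin n))
                rw [Finset.sum_empty] at hA
                by_cases hc : a o1 / 2 % 2 = 0
                · refine suf_step a s hIH ∅ (by simp) hSa (by omega) (by omega)
                    ⟨o2, ?_⟩ (Or.inr ⟨o1, ?_⟩)
                  · rw [if_neg (Finset.notMem_empty o2)]; omega
                  · rw [if_neg (Finset.notMem_empty o1)]; omega
                · refine suf_step a s hIH ∅ (by simp) hSa (by omega) (by omega)
                    ⟨o1, ?_⟩ (Or.inr ⟨o2, ?_⟩)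
                  · rw [if_neg (Finset.notMem_empty o1)]; omega
                  · rw [if_neg (Finset.notMem_empty o2)]; omega
        · -- n odd
          by_cases hH : (∑ i, a i / 2) % 2 = 0
          · by_cases hp : ∃ i, a i / 2 % 2 = 1
            · obtain ⟨i1, hi1⟩ := hp
              refine suf_step a s hIH ∅ (by simp) hSa ?_ ?_ ⟨i1, ?_⟩ (Or.inl hno)
              · rw [hAsum]; simp; omega
              · rw [hAsum]; simp; omega
              · rw [if_neg (Finset.notMem_empty i1)]; omega
            · push_neg at hp
              have hp' : ∀ i, a i / 2 % 2 = 0 := fun i => by have := hp i; omega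
              refine suf_step a s hIH {o1, o2} ?_ hSa ?_ ?_ ⟨o1, ?_⟩ (Or.inl hno)
              · rw [Finset.card_pair ho12]
              · rw [hAsum, Finset.sum_pair ho12]; omega
              · rw [hAsum, Finset.sum_pair ho12]; omega
              · rw [if_pos (Finset.mem_insert_self o1 {o2})]
                have := hp' o1; omega
          · -- H odd, need a padding index outside O
            have hEex : ∃ e, e ∉ O := by
              by_contra hcon
              push_neg at hcon
              have h1 : O = Finset.univ := Finset.eq_univ_iff_forall.mpr hcon
              have h2 : O.card = n := by rw [h1, Finset.card_univ, Fintype.card_fin]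
              have h3 : n % 2 = 1 := Nat.odd_iff.mp hno
              omega
            obtain ⟨e, he⟩ := hEex
            have hae : a e % 2 = 0 := by
              have h2 : ¬ a e % 2 = 1 := fun hc => he ((hmemO e).mpr hc)
              omega
            by_cases hq : ∃ o ∈ O, a o / 2 % 2 = 0
            · obtain ⟨o, hoO, hop⟩ := hq
              have hao : a o % 2 = 1 := (hmemO o).mp hoO
              have hoe : o ≠ e := fun h => he (h ▸ hoO)
              refine suf_step a s hIH {o, e} ?_ hSa ?_ ?_ ⟨o, ?_⟩ (Or.inl hno)
              · rw [Finset.card_pair hoe]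
              · rw [hAsum, Finset.sum_pair hoe]; omega
              · rw [hAsum, Finset.sum_pair hoe]; omega
              · rw [if_pos (Finset.mem_insert_self o {e})]; omega
            · push_neg at hq
              have hq' : ∀ o ∈ O, a o / 2 % 2 = 1 := fun o ho => by have := hq o ho; omega
              have ho1e : o1 ≠ e := fun h => he (h ▸ ho1)
              have ho2e : o2 ≠ e := fun h => he (h ▸ ho2)
              have ho2B : o2 ∉ ({o1, e} : Finset (Fin n)) := by
                simp only [Finset.mem_insert, Finset.mem_singleton]
                push_neg
                exact ⟨fun h => ho12 h.symm, ho2e⟩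
              refine suf_step a s hIH {o1, e} ?_ hSa ?_ ?_ ⟨o2, ?_⟩ (Or.inl hno)
              · rw [Finset.card_pair ho1e]
              · rw [hAsum, Finset.sum_pair ho1e]; omega
              · rw [hAsum, Finset.sum_pair ho1e]; omega
              · rw [if_neg ho2B]
                have := hq' o2 ho2; omega

lemma le_of_dvd_testBit {m m' x : ℕ} (hd : 2^m ∣ x) (hb : x.testBit m' = true) : m ≤ m' := by
  by_contra hcon
  push_neg at hcon
  obtain ⟨c, hc⟩ := hd
  have h1 : x / 2^m' % 2 = 0 := by
    have h2 : (2:ℕ)^m = 2^m' * (2 * 2^(m - m' - 1)) := by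
      rw [← pow_succ']
      rw [← pow_add]
      congr 1
      omega
    rw [hc, h2, mul_assoc, Nat.mul_div_cancel_left _ (Nat.two_pow_pos m'),
      mul_assoc]
    exact Nat.mul_mod_right 2 _
  rw [Nat.testBit_eq_decide_div_mod_eq] at hb
  simp only [decide_eq_true_eq] at hb
  omega

lemma testBit_of_two_pow_mul {k c : ℕ} (hc : c % 2 = 1) : (2^k * c).testBit k = true := by
  have h1 : 2^k * c = c <<< k := by rw [Nat.shiftLeft_eq, mul_comm]
  rw [h1, Nat.testBit_shiftLeft]
  simp [Nat.testBit_zero, hc]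

end St16

theorem stmt16 (n : ℕ) (hn : 2 ≤ n) (a : Fin n → ℕ)
    (hpos : ∃ i j, i ≠ j ∧ 0 < a i ∧ 0 < a j)
    (k : ℕ) (hk : ∀ i, 2 ^ k ∣ a i) (hkmax : ¬ ∀ i, 2 ^ (k + 1) ∣ a i) :
    (∃ t : Fin n → ℕ, (∀ i, a i ≤ t i) ∧
        nimSum (List.ofFn t) = 0 ∧
        nimSum (List.ofFn fun i => t i - a i) = 0) ↔
      ((Odd n ∧ (nimSum (List.ofFn a)).testBit k = false) ∨
        (Even n ∧
          (((nimSum (List.ofFn a)).testBit k = false ∧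
              ∃ i, (a i).testBit k = false) ∨
            ((nimSum (List.ofFn a)).testBit k = false ∧
              (nimSum (List.ofFn a)).testBit (k + 1) = false ∧ 4 ≤ n) ∨
            nimSum (List.ofFn a) = 0))) := by
  show _ ↔
      ((Odd n ∧ (St16.nsF a).testBit k = false) ∨
        (Even n ∧
          (((St16.nsF a).testBit k = false ∧ ∃ i, (a i).testBit k = false) ∨
            ((St16.nsF a).testBit k = false ∧ (St16.nsF a).testBit (k + 1) = false ∧ 4 ≤ n) ∨
            St16.nsF a = 0)))
  have hLHS : (∃ t : Fin n → ℕ, (∀ i, a i ≤ t i) ∧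
      nimSum (List.ofFn t) = 0 ∧
      nimSum (List.ofFn fun i => t i - a i) = 0) ↔ St16.Solvable a := by
    constructor
    · rintro ⟨t, hle, h1, h2⟩
      refine ⟨fun i => t i - a i, h2, ?_⟩
      have e : (fun i => a i + (t i - a i)) = t := funext fun i => by have := hle i; omega
      show St16.nsF (fun i => a i + (t i - a i)) = 0
      rw [e]
      exact h1
    · rintro ⟨b, hb1, hb2⟩
      refine ⟨fun i => a i + b i, fun i => Nat.le_add_right _ _, hb2, ?_⟩
      show St16.nsF (fun i => a i + b i - a i) = 0
      rw [show (fun i => a i + b i - a i) = b from funext fun i => by omega]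
      exact hb1
  have hj : ∃ j, (a j).testBit k = true := by
    push_neg at hkmax
    obtain ⟨j, hjd⟩ := hkmax
    refine ⟨j, ?_⟩
    obtain ⟨c, hc⟩ := hk j
    have hcodd : c % 2 = 1 := by
      by_contra hcc
      refine hjd ⟨c / 2, ?_⟩
      have h1 : c = 2 * (c / 2) := by omega
      calc a j = 2^k * c := hc
        _ = 2^k * (2 * (c / 2)) := by rw [← h1]
        _ = 2^(k+1) * (c / 2) := by ring
    rw [hc]
    exact St16.testBit_of_two_pow_mul hcodd
  have hk_eq : ∀ k', (∀ i, 2^k' ∣ a i) → (∃ i, (a i).testBit k' = true) → k' = k := by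
    rintro k' hdvd' ⟨j', hj'⟩
    obtain ⟨j, hjb⟩ := hj
    have h1 : k ≤ k' := St16.le_of_dvd_testBit (hk j') hj'
    have h2 : k' ≤ k := St16.le_of_dvd_testBit (hdvd' j) hjb
    omega
  have hSQ : St16.Solvable a ↔ St16.Qgen a :=
    ⟨fun h => St16.nec_aux (∑ i, a i) a le_rfl h,
     fun h => St16.suf_aux (∑ i, a i) a le_rfl h⟩
  have hRHS : St16.Qgen a ↔
      ((Odd n ∧ (St16.nsF a).testBit k = false) ∨
        (Even n ∧
          (((St16.nsF a).testBit k = false ∧ ∃ i, (a i).testBit k = false) ∨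
            ((St16.nsF a).testBit k = false ∧ (St16.nsF a).testBit (k + 1) = false ∧ 4 ≤ n) ∨
            St16.nsF a = 0))) := by
    constructor
    · rintro (h0 | ⟨k', hdvd', hj', hbal', hthird'⟩)
      · rcases Nat.even_or_odd n with he | ho
        · exact Or.inr ⟨he, Or.inr (Or.inr h0)⟩
        · refine Or.inl ⟨ho, ?_⟩
          rw [h0]
          exact Nat.zero_testBit k
      · have hkk : k' = k := hk_eq k' hdvd' hj'
        subst hkk
        rcases hthird' with ho | hex | ⟨hsm, h4⟩
        · exact Or.inl ⟨ho, hbal'⟩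
        · rcases Nat.even_or_odd n with he | ho
          · exact Or.inr ⟨he, Or.inl ⟨hbal', hex⟩⟩
          · exact Or.inl ⟨ho, hbal'⟩
        · rcases Nat.even_or_odd n with he | ho
          · exact Or.inr ⟨he, Or.inr (Or.inl ⟨hbal', hsm, h4⟩)⟩
          · exact Or.inl ⟨ho, hbal'⟩
    · rintro (⟨hodd, hbal⟩ | ⟨heven, h⟩)
      · exact Or.inr ⟨k, hk, hj, hbal, Or.inl hodd⟩
      · rcases h with ⟨hbal, hex⟩ | ⟨hbal, hsm, hn4⟩ | h0
        · exact Or.inr ⟨k, hk, hj, hbal, Or.inr (Or.inl hex)⟩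
        · exact Or.inr ⟨k, hk, hj, hbal, Or.inr (Or.inr ⟨hsm, hn4⟩)⟩
        · exact Or.inl h0
  exact hLHS.trans (hSQ.trans hRHS)
end
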